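/- arXiv:1204.4988 — 2 statements merged into one kernel-verified Lean document; each statement's English description precedes it below -/
import Mathlib

section
/- Let X, Y be SFTs and F a sliding-block code from X to Y. Then Y ⊆ F(X) if and only if every extensible pattern m of Y has a preimage pattern that is admissible for X, i.e., there exists an admissible pattern p of X (of the appropriate enlarged support) with F(p) = m. -/
open Filter Topology

/-- Positions: `ℤ^d`. -/
abbrev Zd (d : ℕ) : Type := Fin d → ℤ

/-- Configurations: maps `ℤ^d → A`. -/
abbrev Config (d : ℕ) (A : Type*) : Type _ := Zd d → A

/-- The block `[-r,r]^d` in `ℤ^d`. -/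
noncomputable def ball (d r : ℕ) : Finset (Zd d) :=
  Fintype.piFinset fun _ => Finset.Icc (-(r : ℤ)) (r : ℤ)

/-- A pattern: a finite support together with a symbol at each position. -/
structure Pattern (d : ℕ) (A : Type*) where
  supp : Finset (Zd d)
  val : Zd d → A

variable {d : ℕ} {A B : Type*}

/-- The pattern `p` occurs in the configuration `x` at position `z`. -/
def Pattern.OccursAt (p : Pattern d A) (x : Config d A) (z : Zd d) : Prop :=
  ∀ v ∈ p.supp, x (z + v) = p.val v

/-- The pattern `q` occurs inside the pattern `p` at position `z`. -/
def Pattern.OccursIn (q p : Pattern d A) (z : Zd d) : Prop :=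
  ∀ v ∈ q.supp, z + v ∈ p.supp ∧ p.val (z + v) = q.val v

/-- The subshift defined by the set `F` of forbidden patterns. -/
def xF (F : Set (Pattern d A)) : Set (Config d A) :=
  {x | ∀ z : Zd d, ∀ p ∈ F, ¬ p.OccursAt x z}

/-- A pattern is admissible if no forbidden pattern occurs inside it. -/
def Admissible (F : Set (Pattern d A)) (p : Pattern d A) : Prop :=
  ∀ z : Zd d, ∀ q ∈ F, ¬ q.OccursIn p z

/-- A pattern is extensible if it occurs in some configuration of the subshift. -/
def Extensible (F : Set (Pattern d A)) (p : Pattern d A) : Prop :=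
  ∃ x ∈ xF F, ∃ z : Zd d, p.OccursAt x z

/-- The shift map by `v`. -/
def shift (v : Zd d) (x : Config d A) : Config d A := fun z => x (z + v)

/-- `f` is a local rule of radius `r`: it only depends on coordinates in `[-r,r]^d`. -/
def IsLocal (r : ℕ) (f : Config d A → B) : Prop :=
  ∀ u u' : Config d A, (∀ v ∈ ball d r, u v = u' v) → f u = f u'

/-- The global sliding-block code induced by the local rule `f`. -/
def sliding (f : Config d A → B) : Config d A → Config d B :=
  fun x z => f fun v => x (z + v)

open scoped Pointwise

lemma mem_ball_iff {d n : ℕ} {z : Zd d} :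
    z ∈ ball d n ↔ ∀ i, -(n : ℤ) ≤ z i ∧ z i ≤ n := by
  simp [ball, Fintype.mem_piFinset, Finset.mem_Icc]

lemma zero_mem_ball {d r : ℕ} : (0 : Zd d) ∈ ball d r := by
  simp only [mem_ball_iff, Pi.zero_apply]
  intro i
  constructor <;> omega

def need {d : ℕ} (z : Zd d) : ℕ := Finset.univ.sup fun i => (z i).natAbs

lemma mem_ball_of_need_le {d n : ℕ} {z : Zd d} (h : need z ≤ n) : z ∈ ball d n := by
  rw [mem_ball_iff]
  intro i
  have : (z i).natAbs ≤ n :=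
    le_trans (Finset.le_sup (f := fun i => (z i).natAbs) (Finset.mem_univ i)) h
  omega

lemma ultra_exists {A : Type} [Finite A] (U : Ultrafilter ℕ) (g : ℕ → A) :
    ∃ a : A, {n | g n = a} ∈ U := by
  by_contra h
  push_neg at h
  have h2 : ∀ a : A, ∀ᶠ n in (U : Filter ℕ), g n ≠ a := by
    intro a
    exact (Ultrafilter.compl_mem_iff_notMem.2 (h a) : _)
  obtain ⟨n, hn⟩ := (Filter.eventually_all.2 h2).exists
  exact hn (g n) rfl

/-- `Y ⊆ F(X)` iff every extensible pattern of `Y` has an admissible preimage pattern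
(with support enlarged by the radius `r`) under the local rule `f`. -/
theorem stmt7 (d : ℕ) (A B : Type) [Finite A] [Finite B]
    (FX : Set (Pattern d A)) (hFX : FX.Finite)
    (FY : Set (Pattern d B)) (hFY : FY.Finite)
    (r : ℕ) (f : Config d A → B) (hf : IsLocal r f) :
    xF FY ⊆ sliding f '' xF FX ↔
      ∀ m : Pattern d B, Extensible FY m →
        ∃ p : Pattern d A, p.supp = m.supp + ball d r ∧ Admissible FX p ∧
          ∀ z ∈ m.supp, f (fun v => p.val (z + v)) = m.val z := by
  classical
  constructor
  · -- forward direction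
    intro hsub m hm
    obtain ⟨y, hy, z, hocc⟩ := hm
    obtain ⟨x, hx, hfx⟩ := hsub hy
    refine ⟨⟨m.supp + ball d r, fun v => x (z + v)⟩, rfl, ?_, ?_⟩
    · intro w q hq hocc'
      apply hx (z + w) q hq
      intro v hv
      have h2 := (hocc' v hv).2
      simpa [add_assoc] using h2
    · intro z' hz'
      have h1 : (fun v => x (z + (z' + v))) = fun v => x ((z + z') + v) := by
        funext v; rw [add_assoc]
      calc f (fun v => x (z + (z' + v))) = sliding f x (z + z') := by
            rw [h1]; rfl
        _ = y (z + z') := by rw [hfx]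
        _ = m.val z' := hocc z' hz'
  · -- converse
    intro H y hy
    have hext : ∀ n : ℕ, Extensible FY ⟨ball d n, y⟩ := by
      intro n
      exact ⟨y, hy, 0, fun v _ => by simp⟩
    choose P hPsupp hPadm hPwin using fun n => H _ (hext n)
    haveI : (Filter.cofinite : Filter ℕ).NeBot := Nat.cofinite_eq_atTop ▸ Filter.atTop_neBot
    set U : Ultrafilter ℕ := Ultrafilter.of Filter.cofinite with hUdef
    have hUcof : ∀ s : Set ℕ, sᶜ.Finite → s ∈ U := by
      intro s hs
      exact Ultrafilter.of_le Filter.cofinite (Filter.mem_cofinite.2 hs)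
    -- define the limit configuration
    have hxex : ∀ z : Zd d, ∃ a : A, {n | (P n).val z = a} ∈ U :=
      fun z => ultra_exists U fun n => (P n).val z
    choose x hx using hxex
    -- the key extraction: for each finite set S and bound N, find a good n
    have hkey : ∀ (S : Finset (Zd d)) (N : ℕ),
        ∃ n, N ≤ n ∧ ∀ w ∈ S, (P n).val w = x w := by
      intro S N
      have h1 : {n | N ≤ n} ∈ U := by
        apply hUcof
        apply Set.Finite.subset (Set.finite_Iio N)
        intro n hn
        simpa using hn
      have h2 : {n | ∀ w ∈ S, (P n).val w = x w} ∈ U := by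
        have := (Filter.eventually_all_finset S (l := (U : Filter ℕ))
          (p := fun w n => (P n).val w = x w)).2 (fun w _ => hx w)
        exact this
      have h3 := Filter.nonempty_of_mem (Filter.inter_mem h1 h2)
      obtain ⟨n, hn1, hn2⟩ := h3
      exact ⟨n, hn1, hn2⟩
    refine ⟨x, ?_, ?_⟩
    · -- x lies in the SFT X
      intro z q hq hocc
      obtain ⟨n, hn1, hn2⟩ := hkey (q.supp.image (z + ·)) (q.supp.sup fun v => need (z + v))
      apply hPadm n z q hq
      intro v hv
      have hmem : z + v ∈ ball d n := by
        apply mem_ball_of_need_le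
        exact le_trans (Finset.le_sup (f := fun v => need (z + v)) hv) hn1
      constructor
      · rw [hPsupp n]
        have := Finset.add_mem_add hmem (zero_mem_ball (d := d) (r := r))
        simpa using this
      · rw [hn2 (z + v) (Finset.mem_image_of_mem _ hv)]
        exact hocc v hv
    · -- sliding f x = y
      funext z
      obtain ⟨n, hn1, hn2⟩ := hkey ((ball d r).image (z + ·)) (need z)
      have hz : z ∈ ball d n := mem_ball_of_need_le hn1
      have hagree : f (fun v => x (z + v)) = f (fun v => (P n).val (z + v)) := by
        apply hf
        intro v hv
        exact (hn2 (z + v) (Finset.mem_image_of_mem _ hv)).symm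
      show f (fun v => x (z + v)) = y z
      rw [hagree]
      exact hPwin n z hz
end

section
/- Conjugacy of two d-dimensional SFTs is a recursively enumerable (Σ⁰₁) property: the set of pairs (X, Y) of SFTs (given by their finite lists of forbidden patterns) that are topologically conjugate is Σ⁰₁ in the arithmetical hierarchy. -/
open Filter Topology

variable {d : ℕ} {A B : Type*}

/-- `X` and `Y` are topologically conjugate via mutually inverse sliding-block codes. -/
def Conj (X : Set (Config d A)) (Y : Set (Config d B)) : Prop :=
  ∃ (r : ℕ) (f : Config d A → B) (g : Config d B → A),
    IsLocal r f ∧ IsLocal r g ∧ sliding f '' X = Y ∧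
    (∀ x ∈ X, sliding g (sliding f x) = x) ∧ (∀ y ∈ Y, sliding f (sliding g y) = y)

/-- Code for a pattern over alphabet `ℕ`: a list of (position, symbol) pairs. -/
abbrev PatternCode : Type := List (List ℤ × ℕ)

/-- Code for an SFT: alphabet size and a finite list of forbidden pattern codes. -/
abbrev SFTCode : Type := ℕ × List PatternCode

def decodePos (d : ℕ) (l : List ℤ) : Zd d := fun i => l.getD i 0

def decodePattern (d : ℕ) (c : PatternCode) : Pattern d ℕ :=
  ⟨(c.map fun q => decodePos d q.1).toFinset,
   fun z => ((c.find? fun q => decide (decodePos d q.1 = z)).map Prod.snd).getD 0⟩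

/-- The SFT coded by `c`: configurations with symbols `< c.1` avoiding all decoded
forbidden patterns. -/
def codeSFT (d : ℕ) (c : SFTCode) : Set (Config d ℕ) :=
  {x | (∀ z : Zd d, x z < c.1) ∧
    ∀ z : Zd d, ∀ pc ∈ c.2, ¬ (decodePattern d pc).OccursAt x z}

/-- A set of codes is `Σ⁰₁` (recursively enumerable). -/
def Sigma01 {α : Type} [Primcodable α] (S : Set α) : Prop :=
  ∃ R : α × ℕ → Bool, Computable R ∧ ∀ a, a ∈ S ↔ ∃ w : ℕ, R (a, w) = true

namespace SC

open Encodable List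

/-! ### Integer coding helpers -/

def natAbsC (a : ℤ) : ℕ := (encode a + 1) / 2

def addC (c₁ c₂ : ℕ) : ℕ :=
  let p := (if c₁ % 2 = 0 then c₁/2 else 0) + (if c₂ % 2 = 0 then c₂/2 else 0)
  let q := (if c₁ % 2 = 0 then 0 else c₁/2 + 1) + (if c₂ % 2 = 0 then 0 else c₂/2 + 1)
  if q ≤ p then 2*(p - q) else 2*(q - p) - 1

def intAdd (a b : ℤ) : ℤ := Denumerable.ofNat ℤ (addC (encode a) (encode b))


lemma encode_int_ofNat (m : ℕ) : encode ((m : ℤ)) = 2 * m := rfl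
lemma encode_int_negSucc (n : ℕ) : encode (Int.negSucc n) = 2 * n + 1 := rfl
lemma ofNat_int_even (m : ℕ) : Denumerable.ofNat ℤ (2*m) = (m : ℤ) := by
  rw [← encode_int_ofNat, Denumerable.ofNat_encode]
lemma ofNat_int_odd (n : ℕ) : Denumerable.ofNat ℤ (2*n+1) = Int.negSucc n := by
  rw [← encode_int_negSucc, Denumerable.ofNat_encode]

lemma natAbsC_eq (a : ℤ) : natAbsC a = a.natAbs := by
  cases a with
  | ofNat m =>
    have h : natAbsC (Int.ofNat m) = (2*m+1)/2 := rfl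
    rw [h]
    have : (Int.ofNat m).natAbs = m := rfl
    rw [this]; omega
  | negSucc n =>
    have h : natAbsC (Int.negSucc n) = (2*n+1+1)/2 := rfl
    rw [h, Int.natAbs_negSucc]
    omega

lemma intAdd_eq (a b : ℤ) : intAdd a b = a + b := by
  have key : ∀ c₁ c₂ : ℤ, intAdd c₁ c₂ = Denumerable.ofNat ℤ (addC (encode c₁) (encode c₂)) :=
    fun _ _ => rfl
  cases a with
  | ofNat m =>
    cases b with
    | ofNat n =>
      have hc : addC (encode (Int.ofNat m)) (encode (Int.ofNat n)) = 2 * (m + n) := by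
        have e1 : encode (Int.ofNat m) = 2*m := rfl
        have e2 : encode (Int.ofNat n) = 2*n := rfl
        rw [e1, e2]; simp only [addC]; split_ifs <;> omega
      rw [key, hc, ofNat_int_even]
      simp only [Int.ofNat_eq_natCast]; push_cast; ring
    | negSucc n =>
      have e1 : encode (Int.ofNat m) = 2*m := rfl
      have e2 : encode (Int.negSucc n) = 2*n+1 := rfl
      rcases le_or_gt (n+1) m with h | h
      · have hc : addC (encode (Int.ofNat m)) (encode (Int.negSucc n)) = 2 * (m - (n+1)) := by
          rw [e1, e2]; simp only [addC]; split_ifs <;> omega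
        rw [key, hc, ofNat_int_even]
        simp only [Int.negSucc_eq, Int.ofNat_eq_natCast]; omega
      · have hc : addC (encode (Int.ofNat m)) (encode (Int.negSucc n)) = 2 * (n - m) + 1 := by
          rw [e1, e2]; simp only [addC]; split_ifs <;> omega
        rw [key, hc, ofNat_int_odd]
        simp only [Int.negSucc_eq, Int.ofNat_eq_natCast]; omega
  | negSucc m =>
    cases b with
    | ofNat n =>
      have e1 : encode (Int.negSucc m) = 2*m+1 := rfl
      have e2 : encode (Int.ofNat n) = 2*n := rfl
      rcases le_or_gt (m+1) n with h | h
      · have hc : addC (encode (Int.negSucc m)) (encode (Int.ofNat n)) = 2 * (n - (m+1)) := by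
          rw [e1, e2]; simp only [addC]; split_ifs <;> omega
        rw [key, hc, ofNat_int_even]
        simp only [Int.negSucc_eq, Int.ofNat_eq_natCast]; omega
      · have hc : addC (encode (Int.negSucc m)) (encode (Int.ofNat n)) = 2 * (m - n) + 1 := by
          rw [e1, e2]; simp only [addC]; split_ifs <;> omega
        rw [key, hc, ofNat_int_odd]
        simp only [Int.negSucc_eq, Int.ofNat_eq_natCast]; omega
    | negSucc n =>
      have e1 : encode (Int.negSucc m) = 2*m+1 := rfl
      have e2 : encode (Int.negSucc n) = 2*n+1 := rfl
      have hc : addC (encode (Int.negSucc m)) (encode (Int.negSucc n)) = 2 * (m + n + 1) + 1 := by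
        rw [e1, e2]; simp only [addC]; split_ifs <;> omega
      rw [key, hc, ofNat_int_odd]
      simp only [Int.negSucc_eq]; omega


/-! ### Positions and blocks -/

def canonP (d : ℕ) (l : List ℤ) : List ℤ := (List.range d).map fun i => l.getD i 0

def addP (d : ℕ) (p q : List ℤ) : List ℤ :=
  (List.range d).map fun i => intAdd (p.getD i 0) (q.getD i 0)

def zeroP (d : ℕ) : List ℤ := canonP d []

def intRange (k : ℕ) : List ℤ := (List.range (2*k+1)).map (Denumerable.ofNat ℤ)

def posList : ℕ → ℕ → List (List ℤ)
  | 0, _ => [[]]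
  | (d+1), k => (intRange k).flatMap fun i => (posList d k).map fun l => i :: l

def allBlocks (n : ℕ) : ℕ → List (List ℕ)
  | 0 => [[]]
  | (L+1) => (allBlocks n L).flatMap fun b => (List.range n).map fun s => s :: b

def allB {β : Type*} (l : List β) (p : β → Bool) : Bool := l.foldr (fun a r => p a && r) true

def valPC (d : ℕ) (pc : PatternCode) (v : List ℤ) : ℕ :=
  pc.foldr (fun e r => if canonP d e.1 = v then e.2 else r) 0

def lookupL (t l : List ℕ) : ℕ := t.getD (encode l) 0

def idxP (L : List (List ℤ)) (p : List ℤ) : ℕ := L.findIdx (fun q => decide (q = p))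

def valA (d k : ℕ) (b : List ℕ) (p : List ℤ) : ℕ := b.getD (idxP (posList d k) p) 0

def extB (d k : ℕ) (b : List ℕ) : Config d ℕ := fun z => valA d k b (List.ofFn z)

def memB (p : List ℤ) (L : List (List ℤ)) : Bool := decide (idxP L p < L.length)

lemma getD_map_range {α : Type*} (f : ℕ → α) (n i : ℕ) (y : α) :
    (((List.range n).map f).getD i y) = if i < n then f i else y := by
  rcases lt_or_ge i n with h | h
  · rw [List.getD_eq_getElem?_getD, List.getElem?_map, List.getElem?_range h]
    simp [h]
  · rw [List.getD_eq_default]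
    · simp [Nat.not_lt.mpr h]
    · simpa using h

lemma canonP_length (d : ℕ) (l : List ℤ) : (canonP d l).length = d := by simp [canonP]

lemma addP_length (d : ℕ) (p q : List ℤ) : (addP d p q).length = d := by simp [addP]

lemma zeroP_length (d : ℕ) : (zeroP d).length = d := by simp [zeroP, canonP]

lemma getD_canonP (d : ℕ) (l : List ℤ) (i : ℕ) :
    (canonP d l).getD i 0 = if i < d then l.getD i 0 else 0 := getD_map_range _ _ _ _

lemma getD_addP (d : ℕ) (p q : List ℤ) (i : ℕ) :
    (addP d p q).getD i 0 = if i < d then p.getD i 0 + q.getD i 0 else 0 := by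
  rw [addP, getD_map_range]
  simp [intAdd_eq]

lemma getD_zeroP (d i : ℕ) : (zeroP d).getD i 0 = 0 := by
  rw [zeroP, getD_canonP]; simp

lemma decodePos_canonP (d : ℕ) (l : List ℤ) : decodePos d (canonP d l) = decodePos d l := by
  funext i
  show (canonP d l).getD i 0 = l.getD i 0
  rw [getD_canonP, if_pos i.isLt]

lemma decodePos_addP (d : ℕ) (p q : List ℤ) :
    decodePos d (addP d p q) = decodePos d p + decodePos d q := by
  funext i
  show (addP d p q).getD i 0 = p.getD i 0 + q.getD i 0
  rw [getD_addP, if_pos i.isLt]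

lemma decodePos_zeroP (d : ℕ) : decodePos d (zeroP d) = 0 := by
  funext i
  show (zeroP d).getD i 0 = 0
  exact getD_zeroP d i

lemma ofFn_decodePos {d : ℕ} {p : List ℤ} (hp : p.length = d) :
    List.ofFn (decodePos d p) = p := by
  apply List.ext_getElem (by simp [hp])
  intro i h1 h2
  rw [List.getElem_ofFn]
  show p.getD (Fin.mk i (by simpa using h1) : Fin d).1 0 = p[i]
  simp [List.getD_eq_getElem, h2]

lemma decodePos_ofFn {d : ℕ} (z : Zd d) : decodePos d (List.ofFn z) = z := by
  funext i
  show (List.ofFn z).getD i 0 = z i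
  have h : (i : ℕ) < (List.ofFn z).length := by simp [i.isLt]
  rw [List.getD_eq_getElem _ _ h, List.getElem_ofFn]

lemma decodePos_inj {d : ℕ} {p q : List ℤ} (hp : p.length = d) (hq : q.length = d)
    (h : decodePos d p = decodePos d q) : p = q := by
  rw [← ofFn_decodePos hp, ← ofFn_decodePos hq, h]

lemma mem_intRange {k : ℕ} {a : ℤ} : a ∈ intRange k ↔ a.natAbs ≤ k := by
  constructor
  · intro h
    rcases List.mem_map.1 h with ⟨j, hj, rfl⟩
    rw [List.mem_range] at hj
    rcases Nat.even_or_odd j with ⟨m, hm⟩ | ⟨m, hm⟩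
    · subst hm
      rw [(by ring : m + m = 2*m), ofNat_int_even]
      simp; omega
    · subst hm
      rw [ofNat_int_odd]
      rw [Int.natAbs_negSucc]; omega
  · intro h
    rw [intRange, List.mem_map]
    refine ⟨encode a, List.mem_range.2 ?_, Denumerable.ofNat_encode a⟩
    cases a with
    | ofNat m =>
      have : encode (Int.ofNat m) = 2*m := rfl
      rw [this]
      have : (Int.ofNat m).natAbs = m := rfl
      omega
    | negSucc n =>
      have : encode (Int.negSucc n) = 2*n+1 := rfl
      rw [this, Int.natAbs_negSucc] at *
      omega

lemma mem_posList {d k : ℕ} {p : List ℤ} :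
    p ∈ posList d k ↔ p.length = d ∧ ∀ a ∈ p, a.natAbs ≤ k := by
  induction d generalizing p with
  | zero =>
    constructor
    · intro h; simp [posList] at h; subst h; simp
    · rintro ⟨h1, _⟩; rw [List.length_eq_zero_iff] at h1; subst h1; simp [posList]
  | succ d ih =>
    rw [posList, List.mem_flatMap]
    constructor
    · rintro ⟨i, hi, hp⟩
      rcases List.mem_map.1 hp with ⟨l, hl, rfl⟩
      rcases ih.1 hl with ⟨h1, h2⟩
      refine ⟨by simp [h1], ?_⟩
      intro a ha
      rcases List.mem_cons.1 ha with rfl | ha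
      · exact mem_intRange.1 hi
      · exact h2 a ha
    · rintro ⟨h1, h2⟩
      cases p with
      | nil => simp at h1
      | cons a t =>
        refine ⟨a, mem_intRange.2 (h2 a (List.mem_cons_self)), ?_⟩
        rw [List.mem_map]
        exact ⟨t, ih.2 ⟨by simpa using h1, fun b hb => h2 b (List.mem_cons_of_mem _ hb)⟩, rfl⟩

lemma mem_ball_iff {d k : ℕ} {z : Zd d} : z ∈ ball d k ↔ ∀ i, (z i).natAbs ≤ k := by
  rw [ball, Fintype.mem_piFinset]
  refine forall_congr' fun i => ?_
  rw [Finset.mem_Icc]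
  omega

lemma ofFn_mem_posList {d k : ℕ} {z : Zd d} (h : ∀ i, (z i).natAbs ≤ k) :
    List.ofFn z ∈ posList d k := by
  rw [mem_posList]
  refine ⟨by simp, ?_⟩
  intro a ha
  rcases List.mem_ofFn.1 ha with ⟨i, rfl⟩
  exact h i

lemma getD_natAbs_le {k : ℕ} {p : List ℤ} (h : ∀ a ∈ p, a.natAbs ≤ k) (i : ℕ) :
    (p.getD i 0).natAbs ≤ k := by
  rcases lt_or_ge i p.length with hi | hi
  · rw [List.getD_eq_getElem _ _ hi]
    exact h _ (List.getElem_mem hi)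
  · rw [List.getD_eq_default _ _ hi]
    simp

lemma decodePos_mem_ball {d k : ℕ} {p : List ℤ} (h : p ∈ posList d k) :
    decodePos d p ∈ ball d k := by
  rw [mem_ball_iff]
  intro i
  exact getD_natAbs_le (mem_posList.1 h).2 i

lemma allB_iff {β : Type*} {l : List β} {p : β → Bool} :
    allB l p = true ↔ ∀ a ∈ l, p a = true := by
  induction l with
  | nil => simp [allB]
  | cons a t ih => simp [allB, List.foldr_cons]; intro _; exact ih

lemma mem_allBlocks {n L : ℕ} {b : List ℕ} :
    b ∈ allBlocks n L ↔ b.length = L ∧ ∀ a ∈ b, a < n := by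
  induction L generalizing b with
  | zero =>
    constructor
    · intro h; simp [allBlocks] at h; subst h; simp
    · rintro ⟨h1, _⟩; rw [List.length_eq_zero_iff] at h1; subst h1; simp [allBlocks]
  | succ L ih =>
    rw [allBlocks, List.mem_flatMap]
    constructor
    · rintro ⟨l, hl, hb⟩
      rcases List.mem_map.1 hb with ⟨s, hs, rfl⟩
      rcases ih.1 hl with ⟨h1, h2⟩
      refine ⟨by simp [h1], ?_⟩
      intro a ha
      rcases List.mem_cons.1 ha with rfl | ha
      · exact List.mem_range.1 hs
      · exact h2 a ha
    · rintro ⟨h1, h2⟩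
      cases b with
      | nil => simp at h1
      | cons a t =>
        refine ⟨t, ih.2 ⟨by simpa using h1, fun s hs => h2 s (List.mem_cons_of_mem _ hs)⟩, ?_⟩
        rw [List.mem_map]
        exact ⟨a, List.mem_range.2 (h2 a (List.mem_cons_self)), rfl⟩

lemma idxP_getD_map {α : Type*} (f : List ℤ → α) {p : List ℤ} {L : List (List ℤ)} (y : α)
    (hp : p ∈ L) : (L.map f).getD (idxP L p) y = f p := by
  induction L with
  | nil => simp at hp
  | cons a t ih =>
    by_cases h : a = p
    · subst h; simp [idxP, List.findIdx_cons]
    · rw [idxP, List.findIdx_cons]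
      simp only [decide_eq_false h, cond_false]
      simp only [List.map_cons, List.getD_cons_succ]
      exact ih (by rcases List.mem_cons.1 hp with h'|h'; exact absurd h'.symm h; exact h')

lemma idxP_lt_iff {L : List (List ℤ)} {p : List ℤ} : idxP L p < L.length ↔ p ∈ L := by
  induction L with
  | nil => simp [idxP]
  | cons a t ih =>
    by_cases h : a = p
    · subst h; simp [idxP, List.findIdx_cons]
    · rw [idxP, List.findIdx_cons]
      simp only [decide_eq_false h, cond_false, List.length_cons, List.mem_cons]
      constructor
      · intro hh; exact Or.inr (ih.1 (by simpa [idxP] using Nat.lt_of_succ_lt_succ hh))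
      · rintro (h'|h')
        · exact absurd h'.symm h
        · simpa [idxP] using Nat.succ_lt_succ (ih.2 h')

lemma memB_iff {p : List ℤ} {L : List (List ℤ)} : memB p L = true ↔ p ∈ L := by
  rw [memB, decide_eq_true_iff]
  exact idxP_lt_iff

lemma valA_map {d k : ℕ} (f : List ℤ → ℕ) {p : List ℤ} (hp : p ∈ posList d k) :
    valA d k ((posList d k).map f) p = f p := idxP_getD_map f 0 hp

lemma valA_eq_extB {d k : ℕ} (b : List ℕ) {p : List ℤ} (hp : p.length = d) :
    valA d k b p = extB d k b (decodePos d p) := by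
  rw [extB, ofFn_decodePos hp]

lemma valPC_canonP (d : ℕ) (pc : PatternCode) (l : List ℤ) :
    valPC d pc (canonP d l) = (decodePattern d pc).val (decodePos d l) := by
  induction pc with
  | nil => simp [valPC, decodePattern]
  | cons e t ih =>
    have hcond : (canonP d e.1 = canonP d l) ↔ (decodePos d e.1 = decodePos d l) := by
      constructor
      · intro h
        rw [← decodePos_canonP d e.1, ← decodePos_canonP d l, h]
      · intro h
        apply decodePos_inj (canonP_length d e.1) (canonP_length d l)
        rw [decodePos_canonP, decodePos_canonP, h]
    show (if canonP d e.1 = canonP d l then e.2 else valPC d t (canonP d l)) = _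
    by_cases h : decodePos d e.1 = decodePos d l
    · rw [if_pos (hcond.2 h)]
      show _ = (((e :: t).find? fun q => decide (decodePos d q.1 = decodePos d l)).map Prod.snd).getD 0
      rw [List.find?_cons_of_pos (by simpa using h)]
      rfl
    · rw [if_neg (fun hh => h (hcond.1 hh))]
      show _ = (((e :: t).find? fun q => decide (decodePos d q.1 = decodePos d l)).map Prod.snd).getD 0
      rw [List.find?_cons_of_neg (by simpa using h)]
      exact ih

lemma mem_supp {d : ℕ} {pc : PatternCode} {v : Zd d} :
    v ∈ (decodePattern d pc).supp ↔ ∃ e ∈ pc, decodePos d e.1 = v := by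
  show v ∈ (pc.map fun q => decodePos d q.1).toFinset ↔ _
  rw [List.mem_toFinset, List.mem_map]

lemma le_foldr_max {a : ℕ} {l : List ℕ} (h : a ∈ l) : a ≤ l.foldr max 0 := by
  induction l with
  | nil => simp at h
  | cons b t ih =>
    rcases List.mem_cons.1 h with rfl | h
    · exact le_max_left _ _
    · exact le_trans (ih h) (le_max_right _ _)


/-! ### The checker -/

def dLst (t : ℕ) : List ℕ := (Encodable.decode (α := List ℕ) t).getD []

def radB (c : SFTCode × SFTCode) : ℕ :=
  ((c.1.2 ++ c.2.2).flatMap fun pc => pc.flatMap fun e => e.1.map natAbsC).foldr max 0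

def restrB (d r k : ℕ) (b : List ℕ) (v : List ℤ) : List ℕ :=
  (posList d r).map fun p => valA d k b (addP d v p)

def occB (d k : ℕ) (pc : PatternCode) (b : List ℕ) (z : List ℤ) : Bool :=
  allB pc fun e =>
    memB (addP d z (canonP d e.1)) (posList d k) &&
    (valA d k b (addP d z (canonP d e.1)) == valPC d pc (canonP d e.1))

def admB (d k m : ℕ) (Fc : List PatternCode) (b : List ℕ) : Bool :=
  allB (posList d (k+m)) fun z => allB Fc fun pc => !occB d k pc b z

def checksB (d n₂ : ℕ) (G : List PatternCode) (tF tG : List ℕ) (r k : ℕ) (b : List ℕ) : Bool :=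
  (decide (lookupL tF (restrB d r k b (zeroP d)) < n₂) &&
    allB G fun pc => !(allB pc fun e =>
      lookupL tF (restrB d r k b (canonP d e.1)) == valPC d pc (canonP d e.1))) &&
  (lookupL tG ((posList d r).map fun p => lookupL tF (restrB d r k b p)) == valA d k b (zeroP d))

def sideB (d n₁ n₂ : ℕ) (Fc G : List PatternCode) (tF tG : List ℕ) (r k m : ℕ) : Bool :=
  allB (allBlocks n₁ (posList d k).length) fun b =>
    !admB d k m Fc b || checksB d n₂ G tF tG r k b

def chk (d : ℕ) (a : (SFTCode × SFTCode) × ℕ) : Bool :=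
  sideB d a.1.1.1 a.1.2.1 a.1.1.2 a.1.2.2
      (dLst (Nat.unpair (Nat.unpair a.2).2).1) (dLst (Nat.unpair (Nat.unpair a.2).2).2)
      (Nat.unpair (Nat.unpair a.2).1).1
      ((Nat.unpair (Nat.unpair a.2).1).2 + 2*(Nat.unpair (Nat.unpair a.2).1).1 + radB a.1 + 1)
      (radB a.1) &&
  sideB d a.1.2.1 a.1.1.1 a.1.2.2 a.1.1.2
      (dLst (Nat.unpair (Nat.unpair a.2).2).2) (dLst (Nat.unpair (Nat.unpair a.2).2).1)
      (Nat.unpair (Nat.unpair a.2).1).1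
      ((Nat.unpair (Nat.unpair a.2).1).2 + 2*(Nat.unpair (Nat.unpair a.2).1).1 + radB a.1 + 1)
      (radB a.1)

/-- The local rule induced by a lookup table. -/
def fB (d : ℕ) (t : List ℕ) (r : ℕ) : Config d ℕ → ℕ :=
  fun u => lookupL t ((posList d r).map fun p => u (decodePos d p))

/-! ### Auxiliary bounds -/

lemma radB_entry {c : SFTCode × SFTCode} {pc : PatternCode} (hpc : pc ∈ c.1.2 ++ c.2.2)
    {e : List ℤ × ℕ} (he : e ∈ pc) (i : ℕ) : (e.1.getD i 0).natAbs ≤ radB c := by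
  rcases lt_or_ge i e.1.length with hi | hi
  · rw [List.getD_eq_getElem _ _ hi]
    have hmem : natAbsC (e.1[i]) ∈
        (c.1.2 ++ c.2.2).flatMap fun pc => pc.flatMap fun e => e.1.map natAbsC := by
      rw [List.mem_flatMap]
      refine ⟨pc, hpc, ?_⟩
      rw [List.mem_flatMap]
      exact ⟨e, he, List.mem_map.2 ⟨_, List.getElem_mem hi, rfl⟩⟩
    have := le_foldr_max hmem
    rwa [natAbsC_eq] at this
  · rw [List.getD_eq_default _ _ hi]; simp

lemma radB_canonP {c : SFTCode × SFTCode} {pc : PatternCode} (hpc : pc ∈ c.1.2 ++ c.2.2)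
    {e : List ℤ × ℕ} (he : e ∈ pc) (d i : ℕ) :
    ((canonP d e.1).getD i 0).natAbs ≤ radB c := by
  rw [getD_canonP]
  split
  · exact radB_entry hpc he i
  · simp

lemma posList_getD_bound {d k : ℕ} {p : List ℤ} (hp : p ∈ posList d k) (i : ℕ) :
    (p.getD i 0).natAbs ≤ k := getD_natAbs_le (mem_posList.1 hp).2 i

lemma addP_mem_posList {d k a b : ℕ} {p q : List ℤ}
    (hp : ∀ i, (p.getD i 0).natAbs ≤ a) (hq : ∀ i, (q.getD i 0).natAbs ≤ b)
    (hab : a + b ≤ k) : addP d p q ∈ posList d k := by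
  rw [mem_posList]
  refine ⟨addP_length d p q, ?_⟩
  intro x hx
  rcases List.mem_map.1 hx with ⟨i, _, rfl⟩
  rw [intAdd_eq]
  calc (p.getD i 0 + q.getD i 0).natAbs ≤ (p.getD i 0).natAbs + (q.getD i 0).natAbs :=
        Int.natAbs_add_le _ _
    _ ≤ a + b := Nat.add_le_add (hp i) (hq i)
    _ ≤ k := hab

lemma zeroP_mem_posList (d k : ℕ) : zeroP d ∈ posList d k := by
  rw [mem_posList]
  refine ⟨canonP_length d [], ?_⟩
  intro a ha
  rcases List.mem_map.1 ha with ⟨i, _, rfl⟩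
  simp

lemma zeroP_getD_bound (d i : ℕ) : ((zeroP d).getD i 0).natAbs ≤ 0 := by
  rw [getD_zeroP]; simp

/-! ### Window of a configuration -/

def winB (d k : ℕ) (x : Config d ℕ) (z : Zd d) : List ℕ :=
  (posList d k).map fun p => x (z + decodePos d p)

lemma valA_winB {d k : ℕ} {x : Config d ℕ} {z : Zd d} {p : List ℤ} (hp : p ∈ posList d k) :
    valA d k (winB d k x z) p = x (z + decodePos d p) := valA_map _ hp

/-! ### Soundness of one side of the checker -/

lemma side_sound {d : ℕ} (cc : SFTCode) (n₂ : ℕ) (G : List PatternCode) (tF tG : List ℕ)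
    (r k m : ℕ) (hk : 2*r + m + 1 ≤ k)
    (hmG : ∀ pc ∈ G, ∀ e ∈ pc, ∀ i, (e.1.getD i 0).natAbs ≤ m)
    (hside : sideB d cc.1 n₂ cc.2 G tF tG r k m = true)
    (x : Config d ℕ) (hx : x ∈ codeSFT d cc) (z : Zd d) :
    sliding (fB d tF r) x z < n₂ ∧
    (∀ pc ∈ G, ¬ (decodePattern d pc).OccursAt (sliding (fB d tF r) x) z) ∧
    sliding (fB d tG r) (sliding (fB d tF r) x) z = x z := by
  obtain ⟨hx1, hx2⟩ := hx
  have hb1 : winB d k x z ∈ allBlocks cc.1 (posList d k).length := by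
    rw [mem_allBlocks]
    refine ⟨by simp [winB], ?_⟩
    intro a ha
    rcases List.mem_map.1 ha with ⟨p, _, rfl⟩
    exact hx1 _
  have hslide : ∀ v : Zd d,
      sliding (fB d tF r) x v = lookupL tF ((posList d r).map fun p => x (v + decodePos d p)) :=
    fun v => rfl
  have hb2 : admB d k m cc.2 (winB d k x z) = true := by
    rw [admB, allB_iff]
    intro z' hz'
    rw [allB_iff]
    intro pc hpc
    have hocc : occB d k pc (winB d k x z) z' = false := by
      cases hcase : occB d k pc (winB d k x z) z' with
      | false => rfl
      | true =>
        exfalso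
        have hOcc : (decodePattern d pc).OccursAt x (z + decodePos d z') := by
          intro v hv
          rcases mem_supp.1 hv with ⟨e, he, rfl⟩
          have hall := (allB_iff.1 hcase) e he
          rw [Bool.and_eq_true] at hall
          rcases hall with ⟨hmem, hval⟩
          have hq : addP d z' (canonP d e.1) ∈ posList d k := memB_iff.1 hmem
          have hvala := valA_winB (x := x) (z := z) hq
          have hvpc := valPC_canonP d pc e.1
          have hbeq : valA d k (winB d k x z) (addP d z' (canonP d e.1)) =
              valPC d pc (canonP d e.1) := by simpa using hval
          rw [hvala, hvpc, decodePos_addP, decodePos_canonP] at hbeq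
          rw [add_assoc]
          exact hbeq
        exact hx2 (z + decodePos d z') pc hpc hOcc
    rw [hocc]
    rfl
  have hcheck : checksB d n₂ G tF tG r k (winB d k x z) = true := by
    have hall := allB_iff.1 hside _ hb1
    rw [hb2] at hall
    simpa using hall
  rw [checksB, Bool.and_eq_true, Bool.and_eq_true] at hcheck
  rcases hcheck with ⟨⟨hc1, hc2⟩, hc3⟩
  have keyR : ∀ (v : List ℤ) (kv : ℕ), (∀ i, (v.getD i 0).natAbs ≤ kv) → kv + r ≤ k →
      lookupL tF (restrB d r k (winB d k x z) v) = sliding (fB d tF r) x (z + decodePos d v) := by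
    intro v kv hv1 hv2
    rw [hslide]
    congr 1
    rw [restrB]
    apply List.map_congr_left
    intro p hp
    have hmem : addP d v p ∈ posList d k :=
      addP_mem_posList hv1 (posList_getD_bound hp) hv2
    rw [valA_winB hmem, decodePos_addP, add_assoc]
  refine ⟨?_, ?_, ?_⟩
  · have h1 := of_decide_eq_true hc1
    rwa [keyR (zeroP d) 0 (zeroP_getD_bound d) (by omega), decodePos_zeroP, add_zero] at h1
  · intro pc hpc hOcc
    have h2 := allB_iff.1 hc2 pc hpc
    rw [Bool.not_eq_true'] at h2
    have h3 : allB pc (fun e =>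
        lookupL tF (restrB d r k (winB d k x z) (canonP d e.1)) ==
          valPC d pc (canonP d e.1)) = true := by
      rw [allB_iff]
      intro e he
      have hbound : ∀ i, ((canonP d e.1).getD i 0).natAbs ≤ m := by
        intro i
        rw [getD_canonP]
        split
        · exact hmG pc hpc e he i
        · simp
      rw [keyR (canonP d e.1) m hbound (by omega), decodePos_canonP]
      have := hOcc (decodePos d e.1) (mem_supp.2 ⟨e, he, rfl⟩)
      rw [this, valPC_canonP]
      simp
    rw [h3] at h2
    exact absurd h2 (by simp)
  · have h4 : lookupL tG ((posList d r).map fun p =>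
        lookupL tF (restrB d r k (winB d k x z) p)) = valA d k (winB d k x z) (zeroP d) := by
      simpa using hc3
    have h5 : ((posList d r).map fun p => lookupL tF (restrB d r k (winB d k x z) p)) =
        (posList d r).map fun p => sliding (fB d tF r) x (z + decodePos d p) := by
      apply List.map_congr_left
      intro p hp
      exact keyR p r (posList_getD_bound hp) (by omega)
    rw [h5, valA_winB (zeroP_mem_posList d k), decodePos_zeroP, add_zero] at h4
    exact h4

/-! ### Soundness -/

lemma sound {d : ℕ} (c : SFTCode × SFTCode) (w : ℕ) (h : chk d (c, w) = true) :
    Conj (codeSFT d c.1) (codeSFT d c.2) := by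
  set r := (Nat.unpair (Nat.unpair w).1).1 with hrdef
  set m := radB c with hmdef
  set k := ((Nat.unpair (Nat.unpair w).1).2 + 2*(Nat.unpair (Nat.unpair w).1).1 + radB c + 1)
    with hkdef
  set tF := dLst (Nat.unpair (Nat.unpair w).2).1 with htFdef
  set tG := dLst (Nat.unpair (Nat.unpair w).2).2 with htGdef
  replace h : (sideB d c.1.1 c.2.1 c.1.2 c.2.2 tF tG r k m &&
      sideB d c.2.1 c.1.1 c.2.2 c.1.2 tG tF r k m) = true := h
  rw [Bool.and_eq_true] at h
  rcases h with ⟨h1, h2⟩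
  have hk : 2*r + m + 1 ≤ k := by rw [hkdef, hrdef, hmdef]; omega
  have hmG1 : ∀ pc ∈ c.2.2, ∀ e ∈ pc, ∀ i, (e.1.getD i 0).natAbs ≤ m :=
    fun pc hpc e he i => radB_entry (List.mem_append_right _ hpc) he i
  have hmG2 : ∀ pc ∈ c.1.2, ∀ e ∈ pc, ∀ i, (e.1.getD i 0).natAbs ≤ m :=
    fun pc hpc e he i => radB_entry (List.mem_append_left _ hpc) he i
  have S1 := fun x hx z => side_sound (d := d) c.1 c.2.1 c.2.2 tF tG r k m hk hmG1 h1 x hx z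
  have S2 := fun y hy z => side_sound (d := d) c.2 c.1.1 c.1.2 tG tF r k m hk hmG2 h2 y hy z
  refine ⟨r, fB d tF r, fB d tG r, ?_, ?_, ?_, ?_, ?_⟩
  · intro u u' hagree
    show lookupL tF _ = lookupL tF _
    congr 1
    apply List.map_congr_left
    intro p hp
    exact hagree _ (decodePos_mem_ball hp)
  · intro u u' hagree
    show lookupL tG _ = lookupL tG _
    congr 1
    apply List.map_congr_left
    intro p hp
    exact hagree _ (decodePos_mem_ball hp)
  · apply Set.ext
    intro y
    constructor
    · rintro ⟨x, hx, rfl⟩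
      exact ⟨fun z => (S1 x hx z).1, fun z pc hpc => (S1 x hx z).2.1 pc hpc⟩
    · intro hy
      refine ⟨sliding (fB d tG r) y,
        ⟨fun z => (S2 y hy z).1, fun z pc hpc => (S2 y hy z).2.1 pc hpc⟩, ?_⟩
      funext z
      exact (S2 y hy z).2.2
  · intro x hx
    funext z
    exact (S1 x hx z).2.2
  · intro y hy
    funext z
    exact (S2 y hy z).2.2


/-! ### Topological preliminaries -/

lemma isOpen_cylinder {d : ℕ} (s : Finset (Zd d)) (x₀ : Config d ℕ) :
    IsOpen {x : Config d ℕ | ∀ v ∈ s, x v = x₀ v} := by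
  have : {x : Config d ℕ | ∀ v ∈ s, x v = x₀ v} =
      ⋂ v ∈ s, (fun x : Config d ℕ => x v) ⁻¹' {x₀ v} := by
    ext x; simp
  rw [this]
  exact isOpen_biInter_finset fun v _ =>
    (continuous_apply v).isOpen_preimage _ (isOpen_discrete _)

lemma isClosed_localBool {d R : ℕ} (P : Config d ℕ → Bool)
    (hP : ∀ x x' : Config d ℕ, (∀ v ∈ ball d R, x v = x' v) → P x = P x') (b : Bool) :
    IsClosed {x : Config d ℕ | P x = b} := by
  rw [← isOpen_compl_iff]
  rw [isOpen_iff_forall_mem_open]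
  intro x hx
  refine ⟨{x' | ∀ v ∈ ball d R, x' v = x v}, ?_, isOpen_cylinder _ _, fun v _ => rfl⟩
  intro x' hx'
  have hpp := hP x' x hx'
  simp only [Set.mem_compl_iff, Set.mem_setOf_eq] at hx ⊢
  rw [hpp]
  exact hx

lemma isClosed_symbols {d n : ℕ} : IsClosed {x : Config d ℕ | ∀ z, x z < n} := by
  have : {x : Config d ℕ | ∀ z, x z < n} =
      ⋂ z : Zd d, (fun x : Config d ℕ => x z) ⁻¹' {a | a < n} := by
    ext x; simp
  rw [this]
  exact isClosed_iInter fun z => IsClosed.preimage (continuous_apply z) (isClosed_discrete _)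

lemma isCompact_symbols {d n : ℕ} : IsCompact {x : Config d ℕ | ∀ z, x z < n} := by
  have : {x : Config d ℕ | ∀ z, x z < n} = Set.pi Set.univ (fun _ => Set.Iio n) := by
    ext x; simp [Set.pi]
  rw [this]
  exact isCompact_univ_pi fun _ => (Set.finite_Iio n).isCompact

lemma isClosed_noOccur {d : ℕ} (pc : PatternCode) (z : Zd d) :
    IsClosed {x : Config d ℕ | ¬ (decodePattern d pc).OccursAt x z} := by
  rw [← isOpen_compl_iff]
  have : {x : Config d ℕ | ¬ (decodePattern d pc).OccursAt x z}ᶜ =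
      ⋂ v ∈ (decodePattern d pc).supp, (fun x : Config d ℕ => x (z + v)) ⁻¹'
        {(decodePattern d pc).val v} := by
    ext x
    simp [Pattern.OccursAt]
  rw [this]
  exact isOpen_biInter_finset fun v _ =>
    (continuous_apply _).isOpen_preimage _ (isOpen_discrete _)

/-! ### Blocks with entries below n -/

lemma getD_lt {n : ℕ} {b : List ℕ} (hb : ∀ a ∈ b, a < n) (hn : 0 < n) (i : ℕ) :
    b.getD i 0 < n := by
  rcases lt_or_ge i b.length with hi | hi
  · rw [List.getD_eq_getElem _ _ hi]
    exact hb _ (List.getElem_mem hi)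
  · rw [List.getD_eq_default _ _ hi]
    exact hn

/-! ### The compactness lemma -/

lemma lemC {d : ℕ} (n m R : ℕ) (Fc : List PatternCode) (P : Config d ℕ → Bool)
    (hm : ∀ pc ∈ Fc, ∀ e ∈ pc, ∀ i, (e.1.getD i 0).natAbs ≤ m)
    (hP : ∀ x x' : Config d ℕ, (∀ v ∈ ball d R, x v = x' v) → P x = P x')
    (H : ∀ j : ℕ, ∃ k b, j ≤ k ∧ b ∈ allBlocks n (posList d k).length ∧
         admB d k m Fc b = true ∧ P (extB d k b) = true) :
    ∃ x ∈ codeSFT d (n, Fc), P x = true := by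
  have hn : 0 < n := by
    obtain ⟨k, b, _, hb, _, _⟩ := H 0
    rcases mem_allBlocks.1 hb with ⟨hb1, hb2⟩
    have hlen : 0 < b.length := by
      rw [hb1]
      exact List.length_pos_iff.2 (List.ne_nil_of_mem (zeroP_mem_posList d k))
    have := hb2 _ (List.getElem_mem hlen)
    omega
  set T : ℕ → Set (Config d ℕ) := fun j =>
    {x | (∀ z, x z < n) ∧
      (∀ z : Zd d, z ∈ ball d j → ∀ pc ∈ Fc, ¬ (decodePattern d pc).OccursAt x z) ∧
      P x = true} with hT
  have hanti : ∀ ⦃i j : ℕ⦄, i ≤ j → T j ⊆ T i := by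
    intro i j hij x hx
    refine ⟨hx.1, ?_, hx.2.2⟩
    intro z hz pc hpc
    refine hx.2.1 z ?_ pc hpc
    rw [mem_ball_iff] at hz ⊢
    exact fun i' => le_trans (hz i') hij
  have hne : ∀ j, (T j).Nonempty := by
    intro j
    obtain ⟨k, b, hjk, hb, hadm, hPx⟩ := H (j + m)
    rcases mem_allBlocks.1 hb with ⟨_, hblt⟩
    refine ⟨extB d k b, ?_, ?_, hPx⟩
    · intro z
      exact getD_lt hblt hn _
    · intro z hz pc hpc hOcc
      have hzb : ∀ i, (z i).natAbs ≤ j := mem_ball_iff.1 hz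
      have hz' : List.ofFn z ∈ posList d (k+m) :=
        ofFn_mem_posList fun i => le_trans (hzb i) (by omega)
      have hoccB : occB d k pc b (List.ofFn z) = true := by
        rw [occB, allB_iff]
        intro e he
        rw [Bool.and_eq_true]
        constructor
        · rw [memB_iff]
          refine addP_mem_posList (a := j) (b := m) ?_ ?_ (by omega)
          · intro i
            apply getD_natAbs_le
            intro a ha
            rcases List.mem_ofFn.1 ha with ⟨i', rfl⟩
            exact hzb i'
          · intro i
            rw [getD_canonP]
            split
            · exact hm pc hpc e he i
            · simp
        · have h1 : valA d k b (addP d (List.ofFn z) (canonP d e.1)) =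
              extB d k b (z + decodePos d e.1) := by
            rw [valA_eq_extB _ (addP_length d _ _), decodePos_addP, decodePos_ofFn,
              decodePos_canonP]
          have h2 := hOcc (decodePos d e.1) (mem_supp.2 ⟨e, he, rfl⟩)
          rw [h1, h2, valPC_canonP]
          simp
      have := allB_iff.1 (allB_iff.1 hadm (List.ofFn z) hz') pc hpc
      rw [hoccB] at this
      simp at this
  have hclosed : ∀ j, IsClosed (T j) := by
    intro j
    have e1 : T j = {x : Config d ℕ | ∀ z, x z < n} ∩
        (({x : Config d ℕ | ∀ z : Zd d, z ∈ ball d j → ∀ pc ∈ Fc,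
            ¬ (decodePattern d pc).OccursAt x z}) ∩ {x : Config d ℕ | P x = true}) := rfl
    rw [e1]
    refine isClosed_symbols.inter (IsClosed.inter ?_ (isClosed_localBool P hP true))
    have e2 : {x : Config d ℕ | ∀ z : Zd d, z ∈ ball d j → ∀ pc ∈ Fc,
        ¬ (decodePattern d pc).OccursAt x z} =
        ⋂ z : Zd d, ⋂ (_ : z ∈ ball d j), ⋂ pc ∈ Fc,
          {x : Config d ℕ | ¬ (decodePattern d pc).OccursAt x z} := by
      ext x; simp
    rw [e2]
    exact isClosed_iInter fun z => isClosed_iInter fun _ =>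
      isClosed_iInter fun pc => isClosed_iInter fun _ => isClosed_noOccur pc z
  have hcomp : ∀ j, IsCompact (T j) :=
    fun j => isCompact_symbols.of_isClosed_subset (hclosed j) (fun x hx => hx.1)
  have hdir : Directed (· ⊇ ·) T := fun i j =>
    ⟨max i j, hanti (le_max_left i j), hanti (le_max_right i j)⟩
  obtain ⟨x, hx⟩ :=
    IsCompact.nonempty_iInter_of_directed_nonempty_isCompact_isClosed T hdir hne hcomp hclosed
  rw [Set.mem_iInter] at hx
  refine ⟨x, ⟨fun z => (hx 0).1 z, ?_⟩, (hx 0).2.2⟩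
  intro z pc hpc
  have hz : z ∈ ball d (Finset.univ.sup fun i => (z i).natAbs) := by
    rw [mem_ball_iff]
    intro i
    exact Finset.le_sup (f := fun i => (z i).natAbs) (Finset.mem_univ i)
  exact (hx _).2.1 z hz pc hpc


/-! ### The semantic (configuration-level) checker -/

def semB (d n₂ : ℕ) (G : List PatternCode) (tF tG : List ℕ) (r : ℕ) (x : Config d ℕ) : Bool :=
  (decide (lookupL tF (winB d r x 0) < n₂) &&
    allB G fun pc => !(allB pc fun e =>
      lookupL tF (winB d r x (decodePos d e.1)) == valPC d pc (canonP d e.1))) &&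
  (lookupL tG ((posList d r).map fun p => lookupL tF (winB d r x (decodePos d p))) == x 0)

lemma allB_congr {β : Type*} {l : List β} {p q : β → Bool} (h : ∀ a ∈ l, p a = q a) :
    allB l p = allB l q := by
  induction l with
  | nil => rfl
  | cons a t ih =>
    have htail : allB t p = allB t q := ih fun b hb => h b (List.mem_cons_of_mem _ hb)
    show (p a && allB t p) = (q a && allB t q)
    rw [h a (List.mem_cons_self), htail]

lemma allB_eq_false {β : Type*} {l : List β} {p : β → Bool} :
    allB l p = false ↔ ∃ a ∈ l, p a = false := by
  constructor
  · intro h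
    by_contra hno
    push_neg at hno
    have : ∀ a ∈ l, p a = true := by
      intro a ha
      cases hpa : p a with
      | false => exact absurd hpa (hno a ha)
      | true => rfl
    rw [allB_iff.2 this] at h
    exact absurd h (by simp)
  · rintro ⟨a, ha, hpa⟩
    cases hall : allB l p with
    | false => rfl
    | true =>
      have := allB_iff.1 hall a ha
      rw [hpa] at this
      exact absurd this (by simp)

lemma checksB_eq_semB (d n₂ : ℕ) (G : List PatternCode) (tF tG : List ℕ) (r k : ℕ)
    (b : List ℕ) :
    checksB d n₂ G tF tG r k b = semB d n₂ G tF tG r (extB d k b) := by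
  have hre : ∀ v : List ℤ, v.length = d →
      restrB d r k b v = winB d r (extB d k b) (decodePos d v) := by
    intro v hv
    rw [restrB, winB]
    apply List.map_congr_left
    intro p hp
    rw [valA_eq_extB _ (addP_length d v p), decodePos_addP]
  have h1 : restrB d r k b (zeroP d) = winB d r (extB d k b) 0 := by
    rw [hre (zeroP d) (zeroP_length d), decodePos_zeroP]
  have h2 : (allB G fun pc => !(allB pc fun e =>
        lookupL tF (restrB d r k b (canonP d e.1)) == valPC d pc (canonP d e.1))) =
      (allB G fun pc => !(allB pc fun e =>
        lookupL tF (winB d r (extB d k b) (decodePos d e.1)) == valPC d pc (canonP d e.1))) := by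
    apply allB_congr
    intro pc _
    congr 1
    apply allB_congr
    intro e _
    rw [hre (canonP d e.1) (canonP_length d e.1), decodePos_canonP]
  have h3 : ((posList d r).map fun p => lookupL tF (restrB d r k b p)) =
      ((posList d r).map fun p => lookupL tF (winB d r (extB d k b) (decodePos d p))) := by
    apply List.map_congr_left
    intro p hp
    rw [hre p (mem_posList.1 hp).1]
  have h4 : valA d k b (zeroP d) = extB d k b 0 := by
    have := valA_eq_extB (k := k) b (zeroP_length d)
    rwa [decodePos_zeroP] at this
  simp only [checksB, semB]
  rw [h1, h2, h3, h4]

lemma semB_local {d n₂ : ℕ} {G : List PatternCode} (tF tG : List ℕ) (r m : ℕ)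
    (hmG : ∀ pc ∈ G, ∀ e ∈ pc, ∀ i, (e.1.getD i 0).natAbs ≤ m)
    (x x' : Config d ℕ) (hagree : ∀ v ∈ ball d (m + 2*r), x v = x' v) :
    semB d n₂ G tF tG r x = semB d n₂ G tF tG r x' := by
  have hwin : ∀ (v : Zd d) (kv : ℕ), (∀ i, (v i).natAbs ≤ kv) → kv + r ≤ m + 2*r →
      winB d r x v = winB d r x' v := by
    intro v kv hv hle
    apply List.map_congr_left
    intro p hp
    apply hagree
    rw [mem_ball_iff]
    intro i
    calc ((v + decodePos d p) i).natAbs = (v i + decodePos d p i).natAbs := rfl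
      _ ≤ (v i).natAbs + (decodePos d p i).natAbs := Int.natAbs_add_le _ _
      _ ≤ kv + r := Nat.add_le_add (hv i) (posList_getD_bound hp i)
      _ ≤ m + 2*r := hle
  have hzero : ∀ i, ((0 : Zd d) i).natAbs ≤ 0 := fun i => by simp
  have h1 : winB d r x 0 = winB d r x' 0 := hwin 0 0 hzero (by omega)
  have h2 : (allB G fun pc => !(allB pc fun e =>
        lookupL tF (winB d r x (decodePos d e.1)) == valPC d pc (canonP d e.1))) =
      (allB G fun pc => !(allB pc fun e =>
        lookupL tF (winB d r x' (decodePos d e.1)) == valPC d pc (canonP d e.1))) := by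
    apply allB_congr
    intro pc hpc
    congr 1
    apply allB_congr
    intro e he
    rw [hwin (decodePos d e.1) m (fun i => hmG pc hpc e he i) (by omega)]
  have h3 : ((posList d r).map fun p => lookupL tF (winB d r x (decodePos d p))) =
      ((posList d r).map fun p => lookupL tF (winB d r x' (decodePos d p))) := by
    apply List.map_congr_left
    intro p hp
    rw [hwin (decodePos d p) r (fun i => posList_getD_bound hp i) (by omega)]
  have h4 : x 0 = x' 0 := hagree 0 (by rw [mem_ball_iff]; intro i; simp)
  simp only [semB]
  rw [h1, h2, h3, h4]

/-! ### Tables from local rules -/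

def cfgOf (d r : ℕ) (l : List ℕ) : Config d ℕ :=
  fun z => l.getD (idxP (posList d r) (List.ofFn z)) 0

def tbl (d r n : ℕ) (f₀ : Config d ℕ → ℕ) : List ℕ :=
  (List.range (((allBlocks n (posList d r).length).map fun l => encode l).foldr max 0 + 1)).map
    fun i => f₀ (cfgOf d r (dLst i))

lemma lookup_tbl {d r n : ℕ} (f₀ : Config d ℕ → ℕ) {l : List ℕ}
    (hl : l ∈ allBlocks n (posList d r).length) :
    lookupL (tbl d r n f₀) l = f₀ (cfgOf d r l) := by
  rw [lookupL, tbl, getD_map_range, if_pos, dLst, Encodable.encodek]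
  · rfl
  · exact Nat.lt_succ_of_le (le_foldr_max (List.mem_map.2 ⟨l, hl, rfl⟩))

lemma winB_mem_allBlocks {d r n : ℕ} {x : Config d ℕ} (hx : ∀ z, x z < n) (v : Zd d) :
    winB d r x v ∈ allBlocks n (posList d r).length := by
  rw [mem_allBlocks]
  refine ⟨by simp [winB], ?_⟩
  intro a ha
  rcases List.mem_map.1 ha with ⟨p, _, rfl⟩
  exact hx _

lemma lookup_win {d r n : ℕ} (f₀ : Config d ℕ → ℕ) (hf : IsLocal r f₀) (x : Config d ℕ)
    (hx : ∀ z, x z < n) (v : Zd d) :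
    lookupL (tbl d r n f₀) (winB d r x v) = sliding f₀ x v := by
  rw [lookup_tbl f₀ (winB_mem_allBlocks hx v)]
  apply hf
  intro u hu
  have hmem : List.ofFn u ∈ posList d r := ofFn_mem_posList (mem_ball_iff.1 hu)
  show (winB d r x v).getD (idxP (posList d r) (List.ofFn u)) 0 = x (v + u)
  rw [winB, idxP_getD_map _ _ hmem, decodePos_ofFn]

/-! ### Completeness -/

lemma complete {d : ℕ} (c : SFTCode × SFTCode)
    (hconj : Conj (codeSFT d c.1) (codeSFT d c.2)) : ∃ w, chk d (c, w) = true := by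
  classical
  obtain ⟨r, f₀, g₀, hfl, hgl, himg, hgf, hfg⟩ := hconj
  set tF := tbl d r c.1.1 f₀ with htF
  set tG := tbl d r c.2.1 g₀ with htG
  have hXY : ∀ x ∈ codeSFT d c.1, sliding f₀ x ∈ codeSFT d c.2 := by
    intro x hx
    rw [← himg]
    exact ⟨x, hx, rfl⟩
  have hYX : ∀ y ∈ codeSFT d c.2,
      sliding g₀ y ∈ codeSFT d c.1 ∧ sliding f₀ (sliding g₀ y) = y := by
    intro y hy
    have hmem : y ∈ sliding f₀ '' (codeSFT d c.1) := by rw [himg]; exact hy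
    rcases hmem with ⟨x, hx, rfl⟩
    rw [hgf x hx]
    exact ⟨hx, rfl⟩
  have hm1 : ∀ pc ∈ c.1.2, ∀ e ∈ pc, ∀ i, (e.1.getD i 0).natAbs ≤ radB c :=
    fun pc hpc e he i => radB_entry (List.mem_append_left _ hpc) he i
  have hm2 : ∀ pc ∈ c.2.2, ∀ e ∈ pc, ∀ i, (e.1.getD i 0).natAbs ≤ radB c :=
    fun pc hpc e he i => radB_entry (List.mem_append_right _ hpc) he i
  -- the semantic checker holds on all configurations of the corresponding SFT
  have semT1 : ∀ x ∈ codeSFT d c.1, semB d c.2.1 c.2.2 tF tG r x = true := by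
    intro x hx
    have hy := hXY x hx
    have e0 : ∀ v : Zd d, lookupL tF (winB d r x v) = sliding f₀ x v :=
      fun v => lookup_win f₀ hfl x hx.1 v
    have e1 : ∀ v : Zd d, lookupL tG (winB d r (sliding f₀ x) v) = sliding g₀ (sliding f₀ x) v :=
      fun v => lookup_win g₀ hgl (sliding f₀ x) hy.1 v
    simp only [semB]
    rw [Bool.and_eq_true, Bool.and_eq_true]
    refine ⟨⟨?_, ?_⟩, ?_⟩
    · rw [e0 0]
      exact decide_eq_true (hy.1 0)
    · rw [allB_iff]
      intro pc hpc
      rw [Bool.not_eq_true']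
      rw [allB_eq_false]
      by_contra hno
      push_neg at hno
      have hOcc : (decodePattern d pc).OccursAt (sliding f₀ x) 0 := by
        intro v hv
        rcases mem_supp.1 hv with ⟨e, he, rfl⟩
        have := hno e he
        have hbeq : lookupL tF (winB d r x (decodePos d e.1)) =
            valPC d pc (canonP d e.1) := by
          cases hcase : (lookupL tF (winB d r x (decodePos d e.1)) ==
              valPC d pc (canonP d e.1)) with
          | false => exact absurd hcase this
          | true => simpa using hcase
        rw [e0] at hbeq
        rw [zero_add, hbeq, valPC_canonP]
      exact hy.2 0 pc hpc hOcc
    · have h3 : ((posList d r).map fun p => lookupL tF (winB d r x (decodePos d p))) =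
          winB d r (sliding f₀ x) 0 := by
        rw [winB]
        apply List.map_congr_left
        intro p hp
        rw [e0, zero_add]
      rw [h3, e1 0, hgf x hx]
      simp
  have semT2 : ∀ y ∈ codeSFT d c.2, semB d c.1.1 c.1.2 tG tF r y = true := by
    intro y hy
    obtain ⟨hgy, hfgy⟩ := hYX y hy
    have e0 : ∀ v : Zd d, lookupL tG (winB d r y v) = sliding g₀ y v :=
      fun v => lookup_win g₀ hgl y hy.1 v
    have e1 : ∀ v : Zd d, lookupL tF (winB d r (sliding g₀ y) v) = sliding f₀ (sliding g₀ y) v :=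
      fun v => lookup_win f₀ hfl (sliding g₀ y) hgy.1 v
    simp only [semB]
    rw [Bool.and_eq_true, Bool.and_eq_true]
    refine ⟨⟨?_, ?_⟩, ?_⟩
    · rw [e0 0]
      exact decide_eq_true (hgy.1 0)
    · rw [allB_iff]
      intro pc hpc
      rw [Bool.not_eq_true']
      rw [allB_eq_false]
      by_contra hno
      push_neg at hno
      have hOcc : (decodePattern d pc).OccursAt (sliding g₀ y) 0 := by
        intro v hv
        rcases mem_supp.1 hv with ⟨e, he, rfl⟩
        have := hno e he
        have hbeq : lookupL tG (winB d r y (decodePos d e.1)) =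
            valPC d pc (canonP d e.1) := by
          cases hcase : (lookupL tG (winB d r y (decodePos d e.1)) ==
              valPC d pc (canonP d e.1)) with
          | false => exact absurd hcase this
          | true => simpa using hcase
        rw [e0] at hbeq
        rw [zero_add, hbeq, valPC_canonP]
      exact hgy.2 0 pc hpc hOcc
    · have h3 : ((posList d r).map fun p => lookupL tG (winB d r y (decodePos d p))) =
          winB d r (sliding g₀ y) 0 := by
        rw [winB]
        apply List.map_congr_left
        intro p hp
        rw [e0, zero_add]
      rw [h3, e1 0, hfgy]
      simp
  -- suppose there is no witness
  by_contra hcon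
  push_neg at hcon
  have hfail : ∀ k',
      sideB d c.1.1 c.2.1 c.1.2 c.2.2 tF tG r (k' + 2*r + radB c + 1) (radB c) = false ∨
      sideB d c.2.1 c.1.1 c.2.2 c.1.2 tG tF r (k' + 2*r + radB c + 1) (radB c) = false := by
    intro k'
    have h := hcon (Nat.pair (Nat.pair r k') (Nat.pair (encode tF) (encode tG)))
    have hval : chk d (c, Nat.pair (Nat.pair r k') (Nat.pair (encode tF) (encode tG))) =
        (sideB d c.1.1 c.2.1 c.1.2 c.2.2 tF tG r (k' + 2*r + radB c + 1) (radB c) &&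
         sideB d c.2.1 c.1.1 c.2.2 c.1.2 tG tF r (k' + 2*r + radB c + 1) (radB c)) := by
      simp only [chk, Nat.unpair_pair, dLst, Encodable.encodek, Option.getD_some]
    rw [hval] at h
    cases hs1 : sideB d c.1.1 c.2.1 c.1.2 c.2.2 tF tG r (k' + 2*r + radB c + 1) (radB c) with
    | false => exact Or.inl rfl
    | true =>
      cases hs2 : sideB d c.2.1 c.1.1 c.2.2 c.1.2 tG tF r (k' + 2*r + radB c + 1) (radB c) with
      | false => exact Or.inr rfl
      | true =>
        rw [hs1, hs2] at h
        exact absurd rfl h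
  have main :
      (∀ j, ∃ k', j ≤ k' + 2*r + radB c + 1 ∧
        sideB d c.1.1 c.2.1 c.1.2 c.2.2 tF tG r (k' + 2*r + radB c + 1) (radB c) = false) ∨
      (∀ j, ∃ k', j ≤ k' + 2*r + radB c + 1 ∧
        sideB d c.2.1 c.1.1 c.2.2 c.1.2 tG tF r (k' + 2*r + radB c + 1) (radB c) = false) := by
    by_contra hno
    push_neg at hno
    obtain ⟨⟨j₁, hj₁⟩, ⟨j₂, hj₂⟩⟩ := hno
    rcases hfail (j₁ + j₂) with h | h
    · exact hj₁ (j₁ + j₂) (by omega) h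
    · exact hj₂ (j₁ + j₂) (by omega) h
  rcases main with hca | hca
  · have H : ∀ j : ℕ, ∃ k b, j ≤ k ∧ b ∈ allBlocks c.1.1 (posList d k).length ∧
        admB d k (radB c) c.1.2 b = true ∧
        ((fun x => !semB d c.2.1 c.2.2 tF tG r x) (extB d k b)) = true := by
      intro j
      obtain ⟨k', hjk, hside⟩ := hca j
      rw [sideB, allB_eq_false] at hside
      obtain ⟨b, hbmem, hb⟩ := hside
      rw [Bool.or_eq_false_iff] at hb
      obtain ⟨hadm, hchk⟩ := hb
      rw [Bool.not_eq_false'] at hadm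
      refine ⟨k' + 2*r + radB c + 1, b, hjk, hbmem, hadm, ?_⟩
      rw [checksB_eq_semB] at hchk
      show (!semB d c.2.1 c.2.2 tF tG r (extB d (k' + 2*r + radB c + 1) b)) = true
      rw [hchk]
      rfl
    obtain ⟨x, hxmem, hPx⟩ := lemC c.1.1 (radB c) (radB c + 2*r) c.1.2
      (fun x => !semB d c.2.1 c.2.2 tF tG r x) hm1
      (fun x x' hag => congrArg (fun b => !b) (semB_local tF tG r (radB c) hm2 x x' hag)) H
    have hxmem' : x ∈ codeSFT d c.1 := hxmem
    have hsem := semT1 x hxmem'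
    have hPx' : (!semB d c.2.1 c.2.2 tF tG r x) = true := hPx
    rw [hsem] at hPx'
    exact absurd hPx' (by simp)
  · have H : ∀ j : ℕ, ∃ k b, j ≤ k ∧ b ∈ allBlocks c.2.1 (posList d k).length ∧
        admB d k (radB c) c.2.2 b = true ∧
        ((fun y => !semB d c.1.1 c.1.2 tG tF r y) (extB d k b)) = true := by
      intro j
      obtain ⟨k', hjk, hside⟩ := hca j
      rw [sideB, allB_eq_false] at hside
      obtain ⟨b, hbmem, hb⟩ := hside
      rw [Bool.or_eq_false_iff] at hb
      obtain ⟨hadm, hchk⟩ := hb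
      rw [Bool.not_eq_false'] at hadm
      refine ⟨k' + 2*r + radB c + 1, b, hjk, hbmem, hadm, ?_⟩
      rw [checksB_eq_semB] at hchk
      show (!semB d c.1.1 c.1.2 tG tF r (extB d (k' + 2*r + radB c + 1) b)) = true
      rw [hchk]
      rfl
    obtain ⟨y, hymem, hPy⟩ := lemC c.2.1 (radB c) (radB c + 2*r) c.2.2
      (fun y => !semB d c.1.1 c.1.2 tG tF r y) hm2
      (fun x x' hag => congrArg (fun b => !b) (semB_local tG tF r (radB c) hm1 x x' hag)) H
    have hymem' : y ∈ codeSFT d c.2 := hymem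
    have hsem := semT2 y hymem'
    have hPy' : (!semB d c.1.1 c.1.2 tG tF r y) = true := hPy
    rw [hsem] at hPy'
    exact absurd hPy' (by simp)


/-! ### Computability of the checker -/

section Primrec

open Primrec

variable {α : Type} [Primcodable α] {β : Type} [Primcodable β]

lemma pr_band {x y : α → Bool} (hx : Primrec x) (hy : Primrec y) :
    Primrec fun a => (x a && y a) :=
  (Primrec.cond hx hy (const false)).of_eq fun a => by cases x a <;> rfl

lemma pr_bor {x y : α → Bool} (hx : Primrec x) (hy : Primrec y) :
    Primrec fun a => (x a || y a) :=
  (Primrec.cond hx (const true) hy).of_eq fun a => by cases x a <;> rfl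

lemma pr_bnot {x : α → Bool} (hx : Primrec x) : Primrec fun a => !(x a) :=
  (Primrec.cond hx (const false) (const true)).of_eq fun a => by cases x a <;> rfl

lemma pr_max : Primrec₂ (@max ℕ _) :=
  (Primrec.ite Primrec.nat_le Primrec.snd Primrec.fst).of_eq fun p => (max_def _ _).symm

lemma pr_addC : Primrec₂ addC := by
  have hp : Primrec fun c : ℕ => if c % 2 = 0 then c/2 else 0 :=
    Primrec.ite (Primrec.eq.comp (nat_mod.comp Primrec.id (const 2)) (const 0))
      (nat_div.comp Primrec.id (const 2)) (const 0)
  have hq : Primrec fun c : ℕ => if c % 2 = 0 then 0 else c/2 + 1 :=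
    Primrec.ite (Primrec.eq.comp (nat_mod.comp Primrec.id (const 2)) (const 0))
      (const 0) (succ.comp (nat_div.comp Primrec.id (const 2)))
  have hP : Primrec fun x : ℕ × ℕ =>
      (if x.1 % 2 = 0 then x.1/2 else 0) + (if x.2 % 2 = 0 then x.2/2 else 0) :=
    nat_add.comp (hp.comp fst) (hp.comp snd)
  have hQ : Primrec fun x : ℕ × ℕ =>
      (if x.1 % 2 = 0 then 0 else x.1/2 + 1) + (if x.2 % 2 = 0 then 0 else x.2/2 + 1) :=
    nat_add.comp (hq.comp fst) (hq.comp snd)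
  exact (Primrec.ite (nat_le.comp hQ hP)
    (nat_mul.comp (const 2) (nat_sub.comp hP hQ))
    (nat_sub.comp (nat_mul.comp (const 2) (nat_sub.comp hQ hP)) (const 1))).of_eq
    fun x => rfl

lemma pr_intAdd : Primrec₂ intAdd :=
  ((Primrec.ofNat ℤ).comp
    (pr_addC.comp (Primrec.encode.comp fst) (Primrec.encode.comp snd))).of_eq fun _ => rfl

lemma pr_natAbsC : Primrec natAbsC :=
  nat_div.comp (succ.comp Primrec.encode) (const 2)

lemma pr_dLst : Primrec dLst :=
  option_getD.comp (Primrec.decode (α := List ℕ)) (const [])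

lemma pr_intRange : Primrec intRange :=
  Primrec.list_map
    (Primrec.list_range.comp (succ.comp (nat_mul.comp (const 2) Primrec.id)))
    ((Primrec.ofNat ℤ).comp snd)

lemma pr_posList (d : ℕ) : Primrec (posList d) := by
  induction d with
  | zero => exact (const [[]]).of_eq fun k => rfl
  | succ d ih =>
    exact (Primrec.list_flatMap pr_intRange
      ((Primrec.list_map (ih.comp fst)
        ((Primrec.list_cons.comp (snd.comp fst) snd).to₂)).to₂)).of_eq fun k => rfl

lemma pr_allBlocks : Primrec₂ allBlocks := by
  have H : Primrec₂ (fun (p : ℕ × ℕ) (q : ℕ × List (List ℕ)) =>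
      q.2.flatMap fun b => (List.range p.1).map fun s => s :: b) :=
    (Primrec.list_flatMap (snd.comp snd)
      ((Primrec.list_map (Primrec.list_range.comp (fst.comp (fst.comp fst)))
        ((Primrec.list_cons.comp snd (snd.comp fst)).to₂)).to₂)).to₂
  have h2 := Primrec.nat_rec' (f := fun p : ℕ × ℕ => p.2)
      (g := fun _ : ℕ × ℕ => ([[]] : List (List ℕ)))
      (h := fun (p : ℕ × ℕ) (q : ℕ × List (List ℕ)) =>
        q.2.flatMap fun b => (List.range p.1).map fun s => s :: b)
      snd (const [[]]) H
  refine h2.of_eq fun p => ?_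
  obtain ⟨n, L⟩ := p
  induction L with
  | zero => rfl
  | succ L ihL =>
    have he : allBlocks n (L+1) =
        (allBlocks n L).flatMap fun b => (List.range n).map fun s => s :: b := rfl
    rw [he, ← ihL]

lemma pr_canonP (d : ℕ) {f : α → List ℤ} (hf : Primrec f) :
    Primrec fun a => canonP d (f a) :=
  Primrec.list_map (const (List.range d)) ((list_getD 0).comp (hf.comp fst) snd)

lemma pr_addP (d : ℕ) {f g : α → List ℤ} (hf : Primrec f) (hg : Primrec g) :
    Primrec fun a => addP d (f a) (g a) :=
  Primrec.list_map (const (List.range d))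
    (pr_intAdd.comp ((list_getD 0).comp (hf.comp fst) snd)
      ((list_getD 0).comp (hg.comp fst) snd))

lemma pr_idxP {L : α → List (List ℤ)} {p : α → List ℤ} (hL : Primrec L) (hp : Primrec p) :
    Primrec fun a => idxP (L a) (p a) :=
  Primrec.list_findIdx hL (Primrec.eq.comp snd (hp.comp fst)).decide

lemma pr_valA (d : ℕ) {k : α → ℕ} {b : α → List ℕ} {p : α → List ℤ}
    (hk : Primrec k) (hb : Primrec b) (hp : Primrec p) :
    Primrec fun a => valA d (k a) (b a) (p a) :=
  (list_getD 0).comp hb (pr_idxP ((pr_posList d).comp hk) hp)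

lemma pr_lookupL {t l : α → List ℕ} (ht : Primrec t) (hl : Primrec l) :
    Primrec fun a => lookupL (t a) (l a) :=
  (list_getD 0).comp ht (Primrec.encode.comp hl)

lemma pr_memB {p : α → List ℤ} {L : α → List (List ℤ)} (hp : Primrec p) (hL : Primrec L) :
    Primrec fun a => memB (p a) (L a) :=
  (nat_lt.comp (pr_idxP hL hp) (Primrec.list_length.comp hL)).decide

lemma pr_allB {l : α → List β} {p : α → β → Bool} (hl : Primrec l) (hp : Primrec₂ p) :
    Primrec fun a => allB (l a) (p a) :=
  Primrec.list_foldr hl (const true)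
    (pr_band (hp.comp fst (fst.comp snd)) (snd.comp snd)).to₂

lemma pr_valPC (d : ℕ) {pc : α → PatternCode} {v : α → List ℤ}
    (hpc : Primrec pc) (hv : Primrec v) :
    Primrec fun a => valPC d (pc a) (v a) :=
  Primrec.list_foldr hpc (const 0)
    (Primrec.ite
      (Primrec.eq.comp (pr_canonP d (fst.comp (fst.comp snd))) (hv.comp fst))
      (snd.comp (fst.comp snd)) (snd.comp snd)).to₂

lemma pr_restrB (d : ℕ) {r k : α → ℕ} {b : α → List ℕ} {v : α → List ℤ}
    (hr : Primrec r) (hk : Primrec k) (hb : Primrec b) (hv : Primrec v) :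
    Primrec fun a => restrB d (r a) (k a) (b a) (v a) :=
  Primrec.list_map ((pr_posList d).comp hr)
    (pr_valA d (hk.comp fst) (hb.comp fst) (pr_addP d (hv.comp fst) snd))

lemma pr_occB (d : ℕ) {k : α → ℕ} {pc : α → PatternCode} {b : α → List ℕ} {z : α → List ℤ}
    (hk : Primrec k) (hpc : Primrec pc) (hb : Primrec b) (hz : Primrec z) :
    Primrec fun a => occB d (k a) (pc a) (b a) (z a) := by
  apply pr_allB hpc
  exact (pr_band
    (pr_memB (pr_addP d (hz.comp fst) (pr_canonP d (fst.comp snd)))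
      ((pr_posList d).comp (hk.comp fst)))
    (Primrec.beq.comp
      (pr_valA d (hk.comp fst) (hb.comp fst)
        (pr_addP d (hz.comp fst) (pr_canonP d (fst.comp snd))))
      (pr_valPC d (hpc.comp fst) (pr_canonP d (fst.comp snd))))).to₂

lemma pr_admB (d : ℕ) {k m : α → ℕ} {Fc : α → List PatternCode} {b : α → List ℕ}
    (hk : Primrec k) (hm : Primrec m) (hFc : Primrec Fc) (hb : Primrec b) :
    Primrec fun a => admB d (k a) (m a) (Fc a) (b a) := by
  apply pr_allB ((pr_posList d).comp (nat_add.comp hk hm))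
  exact (pr_allB (hFc.comp fst)
    ((pr_bnot (pr_occB d (hk.comp (fst.comp fst)) snd (hb.comp (fst.comp fst))
      (snd.comp fst))).to₂)).to₂

lemma pr_checksB (d : ℕ) {n₂ : α → ℕ} {G : α → List PatternCode} {tF tG : α → List ℕ}
    {r k : α → ℕ} {b : α → List ℕ}
    (hn₂ : Primrec n₂) (hG : Primrec G) (htF : Primrec tF) (htG : Primrec tG)
    (hr : Primrec r) (hk : Primrec k) (hb : Primrec b) :
    Primrec fun a => checksB d (n₂ a) (G a) (tF a) (tG a) (r a) (k a) (b a) := by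
  apply pr_band
  · apply pr_band
    · exact (nat_lt.comp
        (pr_lookupL htF (pr_restrB d hr hk hb (pr_canonP d (const []))))
        hn₂).decide
    · apply pr_allB hG
      exact (pr_bnot (pr_allB snd
        ((Primrec.beq.comp
          (pr_lookupL (htF.comp (fst.comp fst))
            (pr_restrB d (hr.comp (fst.comp fst)) (hk.comp (fst.comp fst))
              (hb.comp (fst.comp fst)) (pr_canonP d (fst.comp snd))))
          (pr_valPC d (snd.comp fst) (pr_canonP d (fst.comp snd)))).to₂))).to₂
  · exact Primrec.beq.comp
      (pr_lookupL htG
        (Primrec.list_map ((pr_posList d).comp hr)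
          ((pr_lookupL (htF.comp fst)
            (pr_restrB d (hr.comp fst) (hk.comp fst) (hb.comp fst) snd)).to₂)))
      (pr_valA d hk hb (pr_canonP d (const [])))

lemma pr_sideB (d : ℕ) {n₁ n₂ : α → ℕ} {Fc G : α → List PatternCode} {tF tG : α → List ℕ}
    {r k m : α → ℕ}
    (hn₁ : Primrec n₁) (hn₂ : Primrec n₂) (hFc : Primrec Fc) (hG : Primrec G)
    (htF : Primrec tF) (htG : Primrec tG) (hr : Primrec r) (hk : Primrec k)
    (hm : Primrec m) :
    Primrec fun a => sideB d (n₁ a) (n₂ a) (Fc a) (G a) (tF a) (tG a) (r a) (k a) (m a) := by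
  apply pr_allB (pr_allBlocks.comp hn₁ (Primrec.list_length.comp ((pr_posList d).comp hk)))
  exact (pr_bor
    (pr_bnot (pr_admB d (hk.comp fst) (hm.comp fst) (hFc.comp fst) snd))
    (pr_checksB d (hn₂.comp fst) (hG.comp fst) (htF.comp fst) (htG.comp fst)
      (hr.comp fst) (hk.comp fst) snd)).to₂

lemma pr_radB : Primrec radB := by
  have h1 : Primrec fun c : SFTCode × SFTCode =>
      (c.1.2 ++ c.2.2).flatMap fun pc => pc.flatMap fun e => e.1.map natAbsC :=
    Primrec.list_flatMap (Primrec.list_append.comp (snd.comp fst) (snd.comp snd))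
      ((Primrec.list_flatMap snd
        ((Primrec.list_map (fst.comp snd) ((pr_natAbsC.comp snd).to₂)).to₂)).to₂)
  exact (Primrec.list_foldr h1 (const 0)
    ((pr_max.comp (fst.comp snd) (snd.comp snd)).to₂)).of_eq fun c => rfl

lemma pr_chk (d : ℕ) : Primrec (chk d) := by
  have hw : Primrec fun a : (SFTCode × SFTCode) × ℕ => a.2 := snd
  have hu1 : Primrec fun a : (SFTCode × SFTCode) × ℕ => (Nat.unpair a.2).1 :=
    fst.comp (Primrec.unpair.comp snd)
  have hu2 : Primrec fun a : (SFTCode × SFTCode) × ℕ => (Nat.unpair a.2).2 :=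
    snd.comp (Primrec.unpair.comp snd)
  have hr : Primrec fun a : (SFTCode × SFTCode) × ℕ => (Nat.unpair (Nat.unpair a.2).1).1 :=
    fst.comp (Primrec.unpair.comp hu1)
  have hk' : Primrec fun a : (SFTCode × SFTCode) × ℕ => (Nat.unpair (Nat.unpair a.2).1).2 :=
    snd.comp (Primrec.unpair.comp hu1)
  have htF : Primrec fun a : (SFTCode × SFTCode) × ℕ =>
      dLst (Nat.unpair (Nat.unpair a.2).2).1 :=
    pr_dLst.comp (fst.comp (Primrec.unpair.comp hu2))
  have htG : Primrec fun a : (SFTCode × SFTCode) × ℕ =>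
      dLst (Nat.unpair (Nat.unpair a.2).2).2 :=
    pr_dLst.comp (snd.comp (Primrec.unpair.comp hu2))
  have hm : Primrec fun a : (SFTCode × SFTCode) × ℕ => radB a.1 := pr_radB.comp fst
  have hk : Primrec fun a : (SFTCode × SFTCode) × ℕ =>
      (Nat.unpair (Nat.unpair a.2).1).2 + 2*(Nat.unpair (Nat.unpair a.2).1).1 + radB a.1 + 1 :=
    succ.comp (nat_add.comp (nat_add.comp hk' (nat_mul.comp (const 2) hr)) hm)
  have hn₁ : Primrec fun a : (SFTCode × SFTCode) × ℕ => a.1.1.1 := fst.comp (fst.comp fst)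
  have hn₂ : Primrec fun a : (SFTCode × SFTCode) × ℕ => a.1.2.1 := fst.comp (snd.comp fst)
  have hF : Primrec fun a : (SFTCode × SFTCode) × ℕ => a.1.1.2 := snd.comp (fst.comp fst)
  have hG : Primrec fun a : (SFTCode × SFTCode) × ℕ => a.1.2.2 := snd.comp (snd.comp fst)
  exact (pr_band
    (pr_sideB d hn₁ hn₂ hF hG htF htG hr hk hm)
    (pr_sideB d hn₂ hn₁ hG hF htG htF hr hk hm)).of_eq fun a => rfl

end Primrec

end SC

/-- Conjugacy of two `d`-dimensional SFTs, given by codes, is `Σ⁰₁`. -/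
theorem stmt9 (d : ℕ) (hd : 1 ≤ d) :
    Sigma01 {c : SFTCode × SFTCode | Conj (codeSFT d c.1) (codeSFT d c.2)} := by
  refine ⟨SC.chk d, (SC.pr_chk d).to_comp, fun a => ?_⟩
  constructor
  · intro h
    exact SC.complete a h
  · rintro ⟨w, hw⟩
    exact SC.sound a w hw
end
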